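/- Let p be a prime and w ∈ V_5. Then #{ ([ℓ],[c]) ∈ P(V_1^*)×P(V_3^*) : (w, ℓ²c) = 0 } = (p+1)(p²+p+1) + p³·Ñ, where Ñ = p+1 if w = 0; Ñ = 1 if w ≠ 0 and there exists a nonzero linear form ℓ over 𝔽_p with ℓ² apolar to w; and Ñ = 0 otherwise. -/

import Mathlib

open Finset

/-- Multiplication of binary forms encoded by coefficient tuples: a binary form
`∑ i, f i • x^(a-i) * y^i` of degree `a` is encoded as the tuple `f : Fin (a+1) → k`,
and multiplication of forms is convolution of coefficient tuples. -/
def formMul {k : Type*} [CommRing k] {a b : ℕ} (f : Fin (a + 1) → k)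
    (g : Fin (b + 1) → k) : Fin (a + b + 1) → k :=
  fun i => ∑ q : Fin (a + 1) × Fin (b + 1),
    if (q.1 : ℕ) + (q.2 : ℕ) = (i : ℕ) then f q.1 * g q.2 else 0

/-- The pairing `(w, v) = ∑ i, w i * v i` between `V_n` and `V_n^*`. -/
def pair {k : Type*} [CommRing k] {n : ℕ} (w v : Fin (n + 1) → k) : k :=
  ∑ i, w i * v i

section Aux

variable {K : Type*} [Field K]

open Fin.NatCast

/-- The coefficients of the linear functional `c ↦ (w, l²·c)`. -/
def Ecoef (w : Fin 6 → K) (l : Fin 2 → K) (j : Fin 4) : K :=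
  l 0 ^ 2 * w ((j : ℕ)) + 2 * (l 0 * l 1) * w ((j : ℕ) + 1) + l 1 ^ 2 * w ((j : ℕ) + 2)

theorem pair_expand (w : Fin 6 → K) (l : Fin 2 → K) (c : Fin 4 → K) :
    pair w (formMul (formMul l l) c) = ∑ j, c j * Ecoef w l j := by
  simp [pair, formMul, Ecoef, Fintype.sum_prod_type, Fin.sum_univ_succ,
    show (Fin.succ 2 : Fin 4) = 3 from rfl, show (Fin.succ 2 : Fin 6) = 3 from rfl,
    show ((Fin.succ 2).succ : Fin 6) = 4 from rfl, show ((Fin.succ 2).succ.succ : Fin 6) = 5 from rfl,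
    show (Fin.succ 3 : Fin 6) = 4 from rfl, show ((Fin.succ 3).succ : Fin 6) = 5 from rfl]
  ring

lemma Ecoef_zero (w : Fin 6 → K) (l : Fin 2 → K) :
    Ecoef w l 0 = l 0 ^ 2 * w 0 + 2 * (l 0 * l 1) * w 1 + l 1 ^ 2 * w 2 := by
  simp [Ecoef]
lemma Ecoef_one (w : Fin 6 → K) (l : Fin 2 → K) :
    Ecoef w l 1 = l 0 ^ 2 * w 1 + 2 * (l 0 * l 1) * w 2 + l 1 ^ 2 * w 3 := by
  simp [Ecoef]
lemma Ecoef_two (w : Fin 6 → K) (l : Fin 2 → K) :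
    Ecoef w l 2 = l 0 ^ 2 * w 2 + 2 * (l 0 * l 1) * w 3 + l 1 ^ 2 * w 4 := by
  simp [Ecoef]
lemma Ecoef_three (w : Fin 6 → K) (l : Fin 2 → K) :
    Ecoef w l 3 = l 0 ^ 2 * w 3 + 2 * (l 0 * l 1) * w 4 + l 1 ^ 2 * w 5 := by
  simp [Ecoef, show ((3 : Fin 4) : ℕ) = 3 from rfl]

/-- If `l²` and `l'²` are both apolar to `w` for two non-proportional linear
forms `l, l'`, then `w = 0`. -/
theorem apolar_unique (w : Fin 6 → K) (l l' : Fin 2 → K)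
    (hE : ∀ j, Ecoef w l j = 0) (hF : ∀ j, Ecoef w l' j = 0)
    (hD : l 0 * l' 1 - l' 0 * l 1 ≠ 0) : w = 0 := by
  set a := l 0 with ha; set b := l 1 with hb; set A := l' 0 with hA; set B := l' 1 with hB
  have e0 := hE 0; have e1 := hE 1; have e2 := hE 2; have e3 := hE 3
  have f0 := hF 0; have f1 := hF 1; have f2 := hF 2; have f3 := hF 3
  rw [Ecoef_zero] at e0 f0; rw [Ecoef_one] at e1 f1
  rw [Ecoef_two] at e2 f2; rw [Ecoef_three] at e3 f3
  set D := a * B - A * b with hDdef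
  have key : ∀ x : K, D * x = 0 → x = 0 := fun x hx =>
    (mul_eq_zero.mp hx).resolve_left hD
  have key2 : ∀ x : K, D * (D * x) = 0 → x = 0 := fun x hx => key x (key _ hx)
  have g0 : a * A * w 0 + (a * B + A * b) * w 1 + b * B * w 2 = 0 :=
    key _ (by linear_combination B * A * e0 + B * B * e1 - b * a * f0 - b * b * f1)
  have g1 : a * A * w 1 + (a * B + A * b) * w 2 + b * B * w 3 = 0 :=
    key _ (by linear_combination B * A * e1 + B * B * e2 - b * a * f1 - b * b * f2)
  have g2 : a * A * w 2 + (a * B + A * b) * w 3 + b * B * w 4 = 0 :=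
    key _ (by linear_combination B * A * e2 + B * B * e3 - b * a * f2 - b * b * f3)
  have g3 : a * A * w 3 + (a * B + A * b) * w 4 + b * B * w 5 = 0 :=
    key _ (by linear_combination a * a * f2 + a * b * f3 - A * A * e2 - A * B * e3)
  have h0 : w 0 = 0 := key2 _ (by linear_combination B^2 * e0 + b^2 * f0 - 2 * b * B * g0)
  have h1 : w 1 = 0 := key2 _ (by linear_combination B^2 * e1 + b^2 * f1 - 2 * b * B * g1)
  have h2 : w 2 = 0 := key2 _ (by linear_combination B^2 * e2 + b^2 * f2 - 2 * b * B * g2)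
  have h3 : w 3 = 0 := key2 _ (by linear_combination B^2 * e3 + b^2 * f3 - 2 * b * B * g3)
  have h4 : w 4 = 0 := key2 _ (by linear_combination A^2 * e2 + a^2 * f2 - 2 * a * A * g2)
  have h5 : w 5 = 0 := key2 _ (by linear_combination A^2 * e3 + a^2 * f3 - 2 * a * A * g3)
  funext i
  fin_cases i <;> simp only [Pi.zero_apply] <;>
    first
    | exact h0 | exact h1 | exact h2 | exact h3 | exact h4 | exact h5

lemma Ecoef_smul (w : Fin 6 → K) (l : Fin 2 → K) (t : K) (j : Fin 4) :
    Ecoef w (t • l) j = t ^ 2 * Ecoef w l j := by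
  simp [Ecoef]; ring

lemma formMul_smul_left {a b : ℕ} (t : K) (f : Fin (a+1) → K) (g : Fin (b+1) → K) :
    formMul (t • f) g = t • formMul f g := by
  funext i
  simp [formMul, Finset.mul_sum, mul_ite, mul_assoc]

lemma formMul_smul_right {a b : ℕ} (t : K) (f : Fin (a+1) → K) (g : Fin (b+1) → K) :
    formMul f (t • g) = t • formMul f g := by
  funext i
  simp only [formMul, Pi.smul_apply, smul_eq_mul, Finset.mul_sum, mul_ite, mul_zero]
  congr 1; funext q; split <;> ring

lemma pair_smul {n : ℕ} (w v : Fin (n+1) → K) (t : K) :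
    pair w (t • v) = t * pair w v := by
  simp [pair, Finset.mul_sum, mul_left_comm]

lemma pair_zero_right {n : ℕ} (w : Fin (n+1) → K) : pair w 0 = 0 := by
  simp [pair]

lemma formMul_zero_right {a b : ℕ} (f : Fin (a+1) → K) :
    formMul f (0 : Fin (b+1) → K) = 0 := by
  funext i; simp [formMul]

lemma pair_scale (w : Fin 6 → K) (l : Fin 2 → K) (c : Fin 4 → K) (t u : K) :
    pair w (formMul (formMul (t • l) (t • l)) (u • c))
      = t ^ 2 * u * pair w (formMul (formMul l l) c) := by
  simp only [formMul_smul_left, formMul_smul_right, smul_smul, pair_smul]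
  ring

lemma ext2 (u v : Fin 2 → K) (h0 : u 0 = v 0) (h1 : u 1 = v 1) : u = v := by
  funext i; fin_cases i; exacts [h0, h1]

lemma proportional (l l' : Fin 2 → K) (hl : l ≠ 0) (hl' : l' ≠ 0)
    (h : l 0 * l' 1 - l' 0 * l 1 = 0) : ∃ t : K, t ≠ 0 ∧ l' = t • l := by
  have hcomp : ∀ u : Fin 2 → K, u ≠ 0 → ¬ (u 0 = 0 ∧ u 1 = 0) := by
    rintro u hu ⟨h0, h1⟩
    exact hu (ext2 _ _ (by simpa using h0) (by simpa using h1))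
  by_cases h0 : l 0 = 0
  · have hl1 : l 1 ≠ 0 := fun h1 => hcomp l hl ⟨h0, h1⟩
    have h'0 : l' 0 = 0 := by
      have : l' 0 * l 1 = 0 := by linear_combination -h + l' 1 * h0
      exact (mul_eq_zero.mp this).resolve_right hl1
    have h'1 : l' 1 ≠ 0 := fun h1 => hcomp l' hl' ⟨h'0, h1⟩
    exact ⟨l' 1 / l 1, div_ne_zero h'1 hl1, ext2 _ _ (by simp [h'0, h0]) (by simp only [Pi.smul_apply, smul_eq_mul]; field_simp)⟩
  · refine ⟨l' 0 / l 0, ?_, ?_⟩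
    · intro ht
      have h'0 : l' 0 = 0 := by
        rcases div_eq_zero_iff.mp ht with h' | h'
        · exact h'
        · exact absurd h' h0
      have h'1 : l' 1 = 0 := by
        have : l 0 * l' 1 = 0 := by linear_combination h + l 1 * h'0
        exact (mul_eq_zero.mp this).resolve_left h0
      exact hcomp l' hl' ⟨h'0, h'1⟩
    · refine ext2 _ _ (by simp only [Pi.smul_apply, smul_eq_mul]; field_simp) ?_
      simp only [Pi.smul_apply, smul_eq_mul]
      field_simp
      linear_combination h

lemma card_linear_solutions [Fintype K] [DecidableEq K] (E : Fin 4 → K) (hE : E ≠ 0) :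
    Fintype.card {c : Fin 4 → K // ∑ j, c j * E j = 0} = Fintype.card K ^ 3 := by
  let φ : (Fin 4 → K) →ₗ[K] K :=
    { toFun := fun c => ∑ j, c j * E j
      map_add' := by intros; simp [add_mul, Finset.sum_add_distrib]
      map_smul' := by intros; simp [Finset.mul_sum, mul_assoc] }
  obtain ⟨j, hj⟩ : ∃ j, E j ≠ 0 := by
    by_contra hcon; push_neg at hcon; exact hE (funext hcon)
  have hsurj : Function.Surjective φ := by
    intro x
    refine ⟨(x / E j) • (Pi.single j 1 : Fin 4 → K), ?_⟩
    have : ∀ i, ((x / E j) • (Pi.single j 1 : Fin 4 → K)) i * E i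
        = if i = j then x / E j * E j else 0 := by
      intro i
      by_cases h : i = j <;> simp [h, Pi.single_apply]
    simp only [φ, LinearMap.coe_mk, AddHom.coe_mk]
    rw [Finset.sum_congr rfl fun i _ => this i]
    simp [div_mul_cancel₀, hj]
  have hrank : Module.finrank K (LinearMap.ker φ) = 3 := by
    have h1 := LinearMap.finrank_range_add_finrank_ker φ
    rw [LinearMap.range_eq_top.mpr hsurj, finrank_top, Module.finrank_self,
      Module.finrank_fin_fun] at h1
    omega
  haveI : Fintype (LinearMap.ker φ) := Fintype.ofFinite _
  have hcard : Fintype.card (LinearMap.ker φ) = Fintype.card K ^ 3 := by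
    rw [Module.card_eq_pow_finrank (K := K) (V := LinearMap.ker φ), hrank]
  rw [← hcard]
  apply Fintype.card_congr
  exact Equiv.subtypeEquivRight (by intro c; simp [φ, LinearMap.mem_ker])

lemma countC [Fintype K] [DecidableEq K] (w : Fin 6 → K) (l : Fin 2 → K) :
    Fintype.card {c : Fin 4 → K // pair w (formMul (formMul l l) c) = 0 ∧ c ≠ 0}
      = (if ∀ j, Ecoef w l j = 0 then Fintype.card K ^ 4 else Fintype.card K ^ 3) - 1 := by
  classical
  have h0 : pair w (formMul (formMul l l) (0 : Fin 4 → K)) = 0 := by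
    rw [formMul_zero_right, pair_zero_right]
  rw [Fintype.card_subtype]
  have hset : univ.filter (fun c : Fin 4 → K =>
        pair w (formMul (formMul l l) c) = 0 ∧ c ≠ 0)
      = (univ.filter (fun c : Fin 4 → K =>
          pair w (formMul (formMul l l) c) = 0)).erase 0 := by
    ext c; simp [Finset.mem_erase, and_comm]
  rw [hset, Finset.card_erase_of_mem (by simp [h0]), ← Fintype.card_subtype]
  congr 1
  by_cases hl : ∀ j, Ecoef w l j = 0
  · rw [if_pos hl,
      Fintype.card_congr (Equiv.subtypeUnivEquiv (fun c => by rw [pair_expand]; simp [hl]))]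
    simp [Fintype.card_fun]
  · rw [if_neg hl]
    push_neg at hl
    have hEne : (fun j => Ecoef w l j) ≠ 0 := by
      obtain ⟨j, hj⟩ := hl
      intro h; exact hj (congrFun h j)
    rw [Fintype.card_congr (Equiv.subtypeEquivRight (fun c => by rw [pair_expand]))]
    exact card_linear_solutions _ hEne

lemma cardA [Fintype K] [DecidableEq K] (w : Fin 6 → K) :
    Fintype.card {x : (Fin 2 → K) × (Fin 4 → K) //
        x.1 ≠ 0 ∧ x.2 ≠ 0 ∧ pair w (formMul (formMul x.1 x.1) x.2) = 0}
      = Fintype.card {l : Fin 2 → K // l ≠ 0 ∧ ∀ j, Ecoef w l j = 0} * (Fintype.card K ^ 4 - 1)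
        + (Fintype.card K ^ 2 - 1 - Fintype.card {l : Fin 2 → K // l ≠ 0 ∧ ∀ j, Ecoef w l j = 0})
          * (Fintype.card K ^ 3 - 1) := by
  classical
  set q := Fintype.card K with hq
  have e1 : {x : (Fin 2 → K) × (Fin 4 → K) //
        x.1 ≠ 0 ∧ x.2 ≠ 0 ∧ pair w (formMul (formMul x.1 x.1) x.2) = 0}
      ≃ Σ l : {l : Fin 2 → K // l ≠ 0},
          {c : Fin 4 → K // pair w (formMul (formMul l.1 l.1) c) = 0 ∧ c ≠ 0} :=
    { toFun := fun a => ⟨⟨a.1.1, a.2.1⟩, ⟨a.1.2, a.2.2.2, a.2.2.1⟩⟩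
      invFun := fun s => ⟨⟨s.1.1, s.2.1⟩, s.1.2, s.2.2.2, s.2.2.1⟩
      left_inv := fun a => rfl
      right_inv := fun s => rfl }
  rw [Fintype.card_congr e1, Fintype.card_sigma]
  have e2 : ∀ l : {l : Fin 2 → K // l ≠ 0},
      Fintype.card {c : Fin 4 → K // pair w (formMul (formMul l.1 l.1) c) = 0 ∧ c ≠ 0}
        = if ∀ j, Ecoef w l.1 j = 0 then q ^ 4 - 1 else q ^ 3 - 1 := by
    intro l
    rw [countC w l.1, apply_ite (· - 1)]
  rw [Finset.sum_congr rfl fun l _ => e2 l, Finset.sum_ite, Finset.sum_const,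
    Finset.sum_const, smul_eq_mul, smul_eq_mul]
  have hfc : (univ.filter (fun l : {l : Fin 2 → K // l ≠ 0} => ∀ j, Ecoef w l.1 j = 0)).card
      = Fintype.card {l : Fin 2 → K // l ≠ 0 ∧ ∀ j, Ecoef w l j = 0} := by
    rw [← Fintype.card_subtype]
    exact Fintype.card_congr (Equiv.subtypeSubtypeEquivSubtypeInter (fun l : Fin 2 → K => l ≠ 0) (fun l => ∀ j, Ecoef w l j = 0))
  have hfnc : (univ.filter (fun l : {l : Fin 2 → K // l ≠ 0} => ¬ ∀ j, Ecoef w l.1 j = 0)).card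
      = Fintype.card {l : Fin 2 → K // l ≠ 0}
        - Fintype.card {l : Fin 2 → K // l ≠ 0 ∧ ∀ j, Ecoef w l j = 0} := by
    rw [Finset.filter_not, Finset.card_sdiff_of_subset (Finset.filter_subset _ _),
      Finset.card_univ, hfc]
  have hnz : Fintype.card {l : Fin 2 → K // l ≠ 0} = q ^ 2 - 1 := by
    rw [Fintype.card_subtype_compl, Fintype.card_subtype_eq, Fintype.card_fun,
      Fintype.card_fin]
  rw [hfc, hfnc, hnz]

lemma cardS_mul [Fintype K] [DecidableEq K] (w : Fin 6 → K) :
    Nat.card {x : Projectivization K (Fin 2 → K) × Projectivization K (Fin 4 → K) //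
      ∃ (l : Fin 2 → K) (c : Fin 4 → K) (hl : l ≠ 0) (hc : c ≠ 0),
        Projectivization.mk K l hl = x.1 ∧
        Projectivization.mk K c hc = x.2 ∧
        pair w (formMul (formMul l l) c) = 0} * (Fintype.card K - 1) ^ 2
    = Fintype.card {x : (Fin 2 → K) × (Fin 4 → K) //
        x.1 ≠ 0 ∧ x.2 ≠ 0 ∧ pair w (formMul (formMul x.1 x.1) x.2) = 0} := by
  classical
  set S := {x : Projectivization K (Fin 2 → K) × Projectivization K (Fin 4 → K) //
      ∃ (l : Fin 2 → K) (c : Fin 4 → K) (hl : l ≠ 0) (hc : c ≠ 0),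
        Projectivization.mk K l hl = x.1 ∧
        Projectivization.mk K c hc = x.2 ∧
        pair w (formMul (formMul l l) c) = 0} with hS
  set A := {x : (Fin 2 → K) × (Fin 4 → K) //
        x.1 ≠ 0 ∧ x.2 ≠ 0 ∧ pair w (formMul (formMul x.1 x.1) x.2) = 0} with hA
  let π : A → S := fun a =>
    ⟨(Projectivization.mk K a.1.1 a.2.1, Projectivization.mk K a.1.2 a.2.2.1),
      a.1.1, a.1.2, a.2.1, a.2.2.1, rfl, rfl, a.2.2.2⟩
  have hfib : ∀ s : S, Nonempty ({a : A // π a = s} ≃ Kˣ × Kˣ) := by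
    intro s
    obtain ⟨l₀, c₀, hl₀, hc₀, hm1, hm2, hp⟩ := s.2
    let F : Kˣ × Kˣ → {a : A // π a = s} := fun tu =>
      ⟨⟨((tu.1 : K) • l₀, (tu.2 : K) • c₀),
        smul_ne_zero tu.1.ne_zero hl₀, smul_ne_zero tu.2.ne_zero hc₀,
        by rw [pair_scale, hp, mul_zero]⟩, by
          apply Subtype.ext
          apply Prod.ext
          · exact ((Projectivization.mk_eq_mk_iff K _ _ _ hl₀).mpr
              ⟨tu.1, by rw [Units.smul_def]⟩).trans hm1
          · exact ((Projectivization.mk_eq_mk_iff K _ _ _ hc₀).mpr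
              ⟨tu.2, by rw [Units.smul_def]⟩).trans hm2⟩
    have hinj : Function.Injective F := by
      rintro ⟨t, u⟩ ⟨t', u'⟩ h
      have h' : ((((t : K) • l₀, (u : K) • c₀)) : (Fin 2 → K) × (Fin 4 → K))
          = (((t' : K) • l₀, (u' : K) • c₀)) := congrArg (fun z => z.1.1) h
      have h1 : (t : K) • l₀ = (t' : K) • l₀ := congrArg Prod.fst h'
      have h2 : (u : K) • c₀ = (u' : K) • c₀ := congrArg Prod.snd h'
      have ht : ((t : K) - t') • l₀ = 0 := by rw [sub_smul, h1, sub_self]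
      have hu : ((u : K) - u') • c₀ = 0 := by rw [sub_smul, h2, sub_self]
      have ht' : (t : K) = t' := by
        rcases smul_eq_zero.mp ht with h | h
        · exact sub_eq_zero.mp h
        · exact absurd h hl₀
      have hu' : (u : K) = u' := by
        rcases smul_eq_zero.mp hu with h | h
        · exact sub_eq_zero.mp h
        · exact absurd h hc₀
      exact Prod.ext (Units.ext ht') (Units.ext hu')
    have hsurj : Function.Surjective F := by
      rintro ⟨a, ha⟩
      have h1 : Projectivization.mk K a.1.1 a.2.1 = Projectivization.mk K l₀ hl₀ := by
        have h := congrArg (fun z : S => (z : Projectivization K (Fin 2 → K) × Projectivization K (Fin 4 → K)).1) ha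
        exact h.trans hm1.symm
      have h2 : Projectivization.mk K a.1.2 a.2.2.1 = Projectivization.mk K c₀ hc₀ := by
        have h := congrArg (fun z : S => (z : Projectivization K (Fin 2 → K) × Projectivization K (Fin 4 → K)).2) ha
        exact h.trans hm2.symm
      obtain ⟨t, ht⟩ := (Projectivization.mk_eq_mk_iff K _ _ _ hl₀).mp h1
      obtain ⟨u, hu⟩ := (Projectivization.mk_eq_mk_iff K _ _ _ hc₀).mp h2
      refine ⟨(t, u), ?_⟩
      apply Subtype.ext
      apply Subtype.ext
      apply Prod.ext
      · rw [← ht, Units.smul_def]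
      · rw [← hu, Units.smul_def]
    exact ⟨(Equiv.ofBijective F ⟨hinj, hsurj⟩).symm⟩
  have key : Nat.card A = Nat.card S * (Fintype.card K - 1) ^ 2 := by
    have eq1 : Nat.card A = Nat.card (Σ s : S, {a : A // π a = s}) :=
      Nat.card_congr (Equiv.sigmaFiberEquiv π).symm
    have eq2 : Nat.card (Σ s : S, {a : A // π a = s}) = Nat.card (S × (Kˣ × Kˣ)) :=
      Nat.card_congr ((Equiv.sigmaCongrRight fun s => (hfib s).some).trans
        (Equiv.sigmaEquivProd S (Kˣ × Kˣ)))
    rw [eq1, eq2, Nat.card_prod, Nat.card_prod, Nat.card_eq_fintype_card (α := Kˣ),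
      Fintype.card_units, sq]
  rw [← key, Nat.card_eq_fintype_card]

end Aux

open scoped Classical in
/-- Fiber count for the morphism `ψ_{1²,3}` over `[w^⊥]₅`. -/
theorem stmt8 (p : ℕ) [Fact p.Prime] (w : Fin 6 → ZMod p) :
    Nat.card {x : Projectivization (ZMod p) (Fin 2 → ZMod p) ×
        Projectivization (ZMod p) (Fin 4 → ZMod p) //
      ∃ (l : Fin 2 → ZMod p) (c : Fin 4 → ZMod p) (hl : l ≠ 0) (hc : c ≠ 0),
        Projectivization.mk (ZMod p) l hl = x.1 ∧
        Projectivization.mk (ZMod p) c hc = x.2 ∧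
        pair w (formMul (formMul l l) c) = 0} =
    (p + 1) * (p ^ 2 + p + 1) + p ^ 3 *
      (if w = 0 then p + 1
       else if ∃ l : Fin 2 → ZMod p, l ≠ 0 ∧
           ∀ h : Fin 4 → ZMod p, pair w (formMul (formMul l l) h) = 0
         then 1 else 0) := by
  classical
  have hp2 : 2 ≤ p := (Fact.out : p.Prime).two_le
  have hcard : Fintype.card (ZMod p) = p := ZMod.card p
  -- the count of l' with l ≠ 0 and all Ecoef vanishing
  set NT := Fintype.card {l : Fin 2 → ZMod p // l ≠ 0 ∧ ∀ j, Ecoef w l j = 0} with hNT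
  have hkey := (cardS_mul w).trans (cardA w)
  rw [hcard] at hkey
  -- the ∃-condition is equivalent to ∃ l ≠ 0 with all Ecoef vanishing
  have hiff : (∃ l : Fin 2 → ZMod p, l ≠ 0 ∧
      ∀ h : Fin 4 → ZMod p, pair w (formMul (formMul l l) h) = 0)
      ↔ ∃ l : Fin 2 → ZMod p, l ≠ 0 ∧ ∀ j, Ecoef w l j = 0 := by
    constructor
    · rintro ⟨l, hl, hall⟩
      refine ⟨l, hl, fun j => ?_⟩
      have := hall (Pi.single j 1)
      rw [pair_expand] at this
      simpa [Pi.single_apply, ite_mul] using this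
    · rintro ⟨l, hl, hall⟩
      refine ⟨l, hl, fun h => ?_⟩
      rw [pair_expand]
      simp [hall]
  -- compute NT in the three cases
  have hNTval : NT = if w = 0 then p ^ 2 - 1
      else if ∃ l : Fin 2 → ZMod p, l ≠ 0 ∧
          ∀ h : Fin 4 → ZMod p, pair w (formMul (formMul l l) h) = 0
        then p - 1 else 0 := by
    by_cases hw : w = 0
    · rw [if_pos hw, hNT]
      have : ∀ l : Fin 2 → ZMod p, (l ≠ 0 ∧ ∀ j, Ecoef w l j = 0) ↔ l ≠ 0 := by
        intro l
        simp [hw, Ecoef]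
      rw [Fintype.card_congr (Equiv.subtypeEquivRight this), Fintype.card_subtype_compl,
        Fintype.card_subtype_eq, Fintype.card_fun, Fintype.card_fin, hcard]
    · rw [if_neg hw]
      by_cases hex : ∃ l : Fin 2 → ZMod p, l ≠ 0 ∧
          ∀ h : Fin 4 → ZMod p, pair w (formMul (formMul l l) h) = 0
      · rw [if_pos hex]
        obtain ⟨l₀, hl₀, hall₀⟩ := hiff.mp hex
        -- the subtype is in bijection with units
        let F : (ZMod p)ˣ → {l : Fin 2 → ZMod p // l ≠ 0 ∧ ∀ j, Ecoef w l j = 0} :=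
          fun t => ⟨(t : ZMod p) • l₀, smul_ne_zero t.ne_zero hl₀,
            fun j => by rw [Ecoef_smul, hall₀ j, mul_zero]⟩
        have hinj : Function.Injective F := by
          intro t t' h
          have h1 : (t : ZMod p) • l₀ = (t' : ZMod p) • l₀ := congrArg Subtype.val h
          have ht : ((t : ZMod p) - t') • l₀ = 0 := by rw [sub_smul, h1, sub_self]
          apply Units.ext
          rcases smul_eq_zero.mp ht with h' | h'
          · exact sub_eq_zero.mp h'
          · exact absurd h' hl₀
        have hsurj : Function.Surjective F := by
          rintro ⟨l, hl, hall⟩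
          have hdet : l₀ 0 * l 1 - l 0 * l₀ 1 = 0 := by
            by_contra hd
            exact hw (apolar_unique w l₀ l hall₀ hall hd)
          obtain ⟨t, ht, hlt⟩ := proportional l₀ l hl₀ hl hdet
          exact ⟨Units.mk0 t ht, by apply Subtype.ext; exact hlt.symm⟩
        exact hNT.trans ((Fintype.card_congr (Equiv.ofBijective F ⟨hinj, hsurj⟩).symm).trans
          (by rw [Fintype.card_units, hcard]))
      · rw [if_neg hex, hNT]
        rw [Fintype.card_eq_zero_iff]
        refine ⟨fun x => ?_⟩
        exact hex (hiff.mpr ⟨x.1, x.2.1, x.2.2⟩)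
  -- final arithmetic
  have h1 : 1 ≤ p := by omega
  have h2 : 1 ≤ p ^ 2 := Nat.one_le_pow _ _ (by omega)
  have h3 : 1 ≤ p ^ 3 := Nat.one_le_pow _ _ (by omega)
  have h4 : 1 ≤ p ^ 4 := Nat.one_le_pow _ _ (by omega)
  have h5 : p - 1 ≤ p ^ 2 - 1 := by
    have : p ≤ p ^ 2 := Nat.le_self_pow (by norm_num) p
    omega
  have hpos : 0 < (p - 1) ^ 2 := pow_pos (by omega) 2
  refine Nat.eq_of_mul_eq_mul_right hpos ?_
  rw [← hNT] at hkey
  rw [hkey, hNTval]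
  by_cases hw : w = 0
  · rw [if_pos hw, if_pos hw, Nat.sub_self]
    zify [h1, h2, h4]
    ring
  · rw [if_neg hw, if_neg hw]
    by_cases hex : ∃ l : Fin 2 → ZMod p, l ≠ 0 ∧
        ∀ h : Fin 4 → ZMod p, pair w (formMul (formMul l l) h) = 0
    · rw [if_pos hex, if_pos hex]
      zify [h1, h2, h3, h4, h5]
      ring
    · rw [if_neg hex, if_neg hex, Nat.sub_zero]
      zify [h1, h2, h3]
      ring
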